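/- Let n ≥ 2, and let φ, A : [0, T) → ℝ be continuously differentiable with φ(t) > 0, A(t) ≥ 0, φ'(t) = A(t), and A'(t) ≤ ((n-1)/n)·A(t)²/φ(t) + n·φ(t) for all t (the case K = -1). Then ψ(t) := φ(t)^{1/n} satisfies ψ''(t) ≤ ψ(t), hence φ(t)^{1/n} ≤ φ(0)^{1/n}·cosh(t) + (1/n)·φ(0)^{1/n - 1}·A(0)·sinh(t) for all t ∈ [0, T). -/

import Mathlib

theorem isoperimetric_type_hyperbolic (n : ℕ) (hn : 2 ≤ n) (T : ℝ)
    (φ A A' : ℝ → ℝ)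
    (hφpos : ∀ t ∈ Set.Ico (0:ℝ) T, 0 < φ t)
    (hAnonneg : ∀ t ∈ Set.Ico (0:ℝ) T, 0 ≤ A t)
    (hφ' : ∀ t ∈ Set.Ico (0:ℝ) T, HasDerivWithinAt φ (A t) (Set.Ico 0 T) t)
    (hA' : ∀ t ∈ Set.Ico (0:ℝ) T, HasDerivWithinAt A (A' t) (Set.Ico 0 T) t)
    (hA'cont : ContinuousOn A' (Set.Ico 0 T))
    (hbound : ∀ t ∈ Set.Ico (0:ℝ) T,
      A' t ≤ ((n : ℝ) - 1) / n * (A t) ^ 2 / φ t + n * φ t) :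
    (∀ t ∈ Set.Ico (0:ℝ) T,
      derivWithin (derivWithin (fun s => φ s ^ ((1 : ℝ) / n)) (Set.Ico 0 T)) (Set.Ico 0 T) t
        ≤ φ t ^ ((1 : ℝ) / n)) ∧
    (∀ t ∈ Set.Ico (0:ℝ) T,
      φ t ^ ((1 : ℝ) / n)
        ≤ φ 0 ^ ((1 : ℝ) / n) * Real.cosh t
          + (1 / n) * φ 0 ^ ((1 : ℝ) / n - 1) * A 0 * Real.sinh t) := by
  rcases le_or_gt T 0 with hT | hT
  · exact ⟨fun t ht => absurd (ht.1.trans_lt ht.2) hT.not_gt,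
      fun t ht => absurd (ht.1.trans_lt ht.2) hT.not_gt⟩
  have hn0 : (0:ℝ) < (n:ℝ) := by positivity
  set I : Set ℝ := Set.Ico (0:ℝ) T with hI
  have hsI : UniqueDiffOn ℝ I := uniqueDiffOn_Ico 0 T
  set p : ℝ := (1:ℝ) / n with hp
  set ψ : ℝ → ℝ := fun s => φ s ^ p with hψdef
  set B : ℝ → ℝ := fun t => A t * p * φ t ^ (p - 1) with hBdef
  set B' : ℝ → ℝ := fun t =>
    A' t * p * φ t ^ (p - 1) + A t * p * (A t * (p - 1) * φ t ^ (p - 1 - 1)) with hB'def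
  have hψ : ∀ t ∈ I, HasDerivWithinAt ψ (B t) I t := fun t ht =>
    (hφ' t ht).rpow_const (Or.inl (hφpos t ht).ne')
  have hB : ∀ t ∈ I, HasDerivWithinAt B (B' t) I t := by
    intro t ht
    have h1 : HasDerivWithinAt (fun u => A u * p) (A' t * p) I t := (hA' t ht).mul_const p
    have h2 : HasDerivWithinAt (fun u => φ u ^ (p - 1))
        (A t * (p - 1) * φ t ^ (p - 1 - 1)) I t :=
      (hφ' t ht).rpow_const (Or.inl (hφpos t ht).ne')
    exact h1.mul h2
  -- key inequality B' ≤ ψ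
  have key : ∀ t ∈ I, B' t ≤ ψ t := by
    intro t ht
    have hx : 0 < φ t := hφpos t ht
    have e1 : φ t ^ (p - 1 - 1) = φ t ^ (p - 1) / φ t := by
      rw [Real.rpow_sub hx, Real.rpow_one]
    have e2 : φ t ^ p = φ t ^ (p - 1) * φ t := by
      nth_rewrite 1 [show p = (p - 1) + 1 by ring]
      rw [Real.rpow_add_one hx.ne']
    have hy : (0:ℝ) ≤ φ t ^ (p - 1) := Real.rpow_nonneg hx.le _
    have hb := hbound t ht
    have hnp : ((n : ℝ) - 1) / n = 1 - p := by
      rw [hp]; field_simp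
    simp only [hB'def, hψdef, e1, e2]
    have step : A' t * p * φ t ^ (p - 1) ≤
        ((1 - p) * (A t) ^ 2 / φ t + n * φ t) * p * φ t ^ (p - 1) := by
      have hpn : (0:ℝ) < p := by positivity
      have : A' t ≤ (1 - p) * (A t) ^ 2 / φ t + n * φ t := by rw [← hnp]; exact hb
      have := mul_le_mul_of_nonneg_right this (by positivity : (0:ℝ) ≤ p * φ t ^ (p - 1))
      nlinarith [this]
    have eq2 : ((1 - p) * (A t) ^ 2 / φ t + n * φ t) * p * φ t ^ (p - 1)
        + A t * p * (A t * (p - 1) * (φ t ^ (p - 1) / φ t)) = φ t ^ (p - 1) * φ t := by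
      rw [hp]
      field_simp
      ring
    linarith [step, eq2.le]
  constructor
  · intro t ht
    have eOn : Set.EqOn (derivWithin ψ I) B I := fun u hu => (hψ u hu).derivWithin (hsI u hu)
    have : derivWithin (derivWithin ψ I) I t = derivWithin B I t :=
      derivWithin_congr eOn (eOn ht)
    rw [this, (hB t ht).derivWithin (hsI t ht)]
    exact key t ht
  · intro t ht
    set c0 : ℝ := φ 0 ^ p with hc0
    set c1 : ℝ := (1 / n) * φ 0 ^ (p - 1) * A 0 with hc1
    set g : ℝ → ℝ := fun t => c0 * Real.cosh t + c1 * Real.sinh t with hgdef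
    set g' : ℝ → ℝ := fun t => c0 * Real.sinh t + c1 * Real.cosh t with hg'def
    have hg : ∀ u : ℝ, HasDerivAt g (g' u) u := fun u =>
      ((Real.hasDerivAt_cosh u).const_mul c0).add ((Real.hasDerivAt_sinh u).const_mul c1)
    have hg' : ∀ u : ℝ, HasDerivAt g' (g u) u := fun u =>
      ((Real.hasDerivAt_sinh u).const_mul c0).add ((Real.hasDerivAt_cosh u).const_mul c1)
    have h0I : (0:ℝ) ∈ I := ⟨le_refl 0, hT⟩
    have hB0 : B 0 = c1 := by simp only [hBdef, hc1]; ring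
    have hψ0 : ψ 0 = c0 := rfl
    -- First antitone function: F t = exp(-t) * (B t - g' t + (ψ t - g t))
    set F : ℝ → ℝ := fun u => Real.exp (-u) * (B u - g' u + (ψ u - g u)) with hFdef
    have hF : ∀ u ∈ I, HasDerivWithinAt F
        (Real.exp (-u) * (-1) * (B u - g' u + (ψ u - g u))
          + Real.exp (-u) * (B' u - g u + (B u - g' u))) I u := by
      intro u hu
      have hexp : HasDerivAt (fun v : ℝ => Real.exp (-v)) (Real.exp (-u) * (-1)) u := by
        simpa [Function.comp_def] using (Real.hasDerivAt_exp (-u)).comp u (hasDerivAt_neg u)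
      exact hexp.hasDerivWithinAt.mul
        (((hB u hu).sub (hg' u).hasDerivWithinAt).add
          ((hψ u hu).sub (hg u).hasDerivWithinAt))
    have hFanti : AntitoneOn F I := by
      apply antitoneOn_of_deriv_nonpos (convex_Ico 0 T)
        (fun u hu => (hF u hu).continuousWithinAt)
      · intro u hu
        rw [interior_Ico] at hu
        exact ((hF u (Set.Ioo_subset_Ico_self hu)).hasDerivAt
          (Ico_mem_nhds hu.1 hu.2)).differentiableAt.differentiableWithinAt
      · intro u hu
        rw [interior_Ico] at hu
        have huI : u ∈ I := Set.Ioo_subset_Ico_self hu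
        rw [((hF u huI).hasDerivAt (Ico_mem_nhds hu.1 hu.2)).deriv]
        have heq : Real.exp (-u) * (-1) * (B u - g' u + (ψ u - g u))
            + Real.exp (-u) * (B' u - g u + (B u - g' u))
            = Real.exp (-u) * (B' u - ψ u) := by ring
        rw [heq]
        exact mul_nonpos_of_nonneg_of_nonpos (Real.exp_pos _).le
          (sub_nonpos.mpr (key u huI))
    have hF0 : F 0 = 0 := by
      simp only [hFdef, hgdef, hg'def, hB0, hψ0, Real.cosh_zero, Real.sinh_zero]
      ring
    have hP : ∀ u ∈ I, B u - g' u + (ψ u - g u) ≤ 0 := by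
      intro u hu
      have hle : Real.exp (-u) * (B u - g' u + (ψ u - g u)) ≤ 0 := hF0 ▸ hFanti h0I hu hu.1
      nlinarith [Real.exp_pos (-u), hle]
    -- Second antitone function: G t = exp t * (ψ t - g t)
    set G : ℝ → ℝ := fun u => Real.exp u * (ψ u - g u) with hGdef
    have hG : ∀ u ∈ I, HasDerivWithinAt G
        (Real.exp u * (ψ u - g u) + Real.exp u * (B u - g' u)) I u := fun u hu =>
      (Real.hasDerivAt_exp u).hasDerivWithinAt.mul ((hψ u hu).sub (hg u).hasDerivWithinAt)
    have hGanti : AntitoneOn G I := by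
      apply antitoneOn_of_deriv_nonpos (convex_Ico 0 T)
        (fun u hu => (hG u hu).continuousWithinAt)
      · intro u hu
        rw [interior_Ico] at hu
        exact ((hG u (Set.Ioo_subset_Ico_self hu)).hasDerivAt
          (Ico_mem_nhds hu.1 hu.2)).differentiableAt.differentiableWithinAt
      · intro u hu
        rw [interior_Ico] at hu
        have huI : u ∈ I := Set.Ioo_subset_Ico_self hu
        rw [((hG u huI).hasDerivAt (Ico_mem_nhds hu.1 hu.2)).deriv]
        have heq : Real.exp u * (ψ u - g u) + Real.exp u * (B u - g' u)
            = Real.exp u * (B u - g' u + (ψ u - g u)) := by ring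
        rw [heq]
        exact mul_nonpos_of_nonneg_of_nonpos (Real.exp_pos _).le (hP u huI)
    have hG0 : G 0 = 0 := by
      simp only [hGdef, hgdef, hψ0, Real.cosh_zero, Real.sinh_zero]
      ring
    have hle : Real.exp t * (ψ t - g t) ≤ 0 := hG0 ▸ hGanti h0I ht ht.1
    have : ψ t - g t ≤ 0 := by nlinarith [Real.exp_pos t, hle]
    have final : ψ t ≤ g t := by linarith
    simpa [hgdef, hc0, hc1, hψdef, hp] using final
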